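/- arXiv:2009.01688 — 4 statements merged into one kernel-verified Lean document; each statement's English description precedes it below -/
import Mathlib

section
/- For all real x with 0 < x < π/2, one has f₂(x) < 0, where f₂(x) := −8x(π − 3)·cos² x − πx(π − 2)²·cos x + ((−16π + 48)x² + 3π(π − 2)²)·sin x − 2π³x + 8πx³ + 8π²x − 24x³ − 24x. -/
open Real

lemma aux_nonneg {f f' : ℝ → ℝ} (hf : ∀ y, HasDerivAt f (f' y) y)
    (h0 : f 0 = 0) (hf' : ∀ y, 0 ≤ y → 0 ≤ f' y) {x : ℝ} (hx : 0 ≤ x) : 0 ≤ f x := by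
  have hmono : MonotoneOn f (Set.Ici (0:ℝ)) := by
    apply monotoneOn_of_hasDerivWithinAt_nonneg (convex_Ici 0)
      (fun y _ => (hf y).continuousAt.continuousWithinAt)
      (fun y hy => ((hf y).hasDerivWithinAt))
      (fun y hy => hf' y (by simp [interior_Ici] at hy; exact hy.le))
  have h2 := hmono Set.self_mem_Ici (Set.mem_Ici.2 hx) hx
  rw [h0] at h2
  exact h2

lemma my_sin_lb {x : ℝ} (hx : 0 ≤ x) : x - x^3/6 ≤ Real.sin x := by
  have h := aux_nonneg (f := fun y => Real.sin y - (y - y^3/6))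
    (f' := fun y => Real.cos y - (1 - y^2/2))
    (fun y => by
      have := (Real.hasDerivAt_sin y).sub
        ((hasDerivAt_id y).sub ((hasDerivAt_pow 3 y).div_const 6))
      refine this.congr_deriv ?_
      simp
      ring)
    (by norm_num)
    (fun y hy => by have := Real.one_sub_sq_div_two_le_cos (x := y); linarith)
    hx
  simpa using h

lemma my_cos_ub {x : ℝ} (hx : 0 ≤ x) : Real.cos x ≤ 1 - x^2/2 + x^4/24 := by
  have h := aux_nonneg (f := fun y => 1 - y^2/2 + y^4/24 - Real.cos y)
    (f' := fun y => Real.sin y - (y - y^3/6))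
    (fun y => by
      have := ((((hasDerivAt_const y (1:ℝ)).sub ((hasDerivAt_pow 2 y).div_const 2)).add
        ((hasDerivAt_pow 4 y).div_const 24)).sub (Real.hasDerivAt_cos y))
      refine this.congr_deriv ?_
      simp
      ring)
    (by norm_num)
    (fun y hy => by have := my_sin_lb hy; linarith)
    hx
  simpa using h

lemma my_sin_ub {x : ℝ} (hx : 0 ≤ x) : Real.sin x ≤ x - x^3/6 + x^5/120 := by
  have h := aux_nonneg (f := fun y => y - y^3/6 + y^5/120 - Real.sin y)
    (f' := fun y => 1 - y^2/2 + y^4/24 - Real.cos y)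
    (fun y => by
      have := ((((hasDerivAt_id y).sub ((hasDerivAt_pow 3 y).div_const 6)).add
        ((hasDerivAt_pow 5 y).div_const 120)).sub (Real.hasDerivAt_sin y))
      refine this.congr_deriv ?_
      simp
      ring)
    (by norm_num)
    (fun y hy => by have := my_cos_ub hy; linarith)
    hx
  simpa using h

lemma my_cos_lb {x : ℝ} (hx : 0 ≤ x) : 1 - x^2/2 + x^4/24 - x^6/720 ≤ Real.cos x := by
  have h := aux_nonneg (f := fun y => Real.cos y - (1 - y^2/2 + y^4/24 - y^6/720))
    (f' := fun y => (y - y^3/6 + y^5/120) - Real.sin y)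
    (fun y => by
      have := (Real.hasDerivAt_cos y).sub
        ((((hasDerivAt_const y (1:ℝ)).sub ((hasDerivAt_pow 2 y).div_const 2)).add
          ((hasDerivAt_pow 4 y).div_const 24)).sub ((hasDerivAt_pow 6 y).div_const 720))
      refine this.congr_deriv ?_
      simp
      ring)
    (by norm_num)
    (fun y hy => by have := my_sin_ub hy; linarith)
    hx
  linarith [h]


set_option maxHeartbeats 8000000 in
theorem f2_neg (x : ℝ) (hx : 0 < x) (hx' : x < π / 2) :
    -8 * x * (π - 3) * cos x ^ 2 - π * x * (π - 2) ^ 2 * cos x +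
        ((-16 * π + 48) * x ^ 2 + 3 * π * (π - 2) ^ 2) * sin x -
        2 * π ^ 3 * x + 8 * π * x ^ 3 + 8 * π ^ 2 * x - 24 * x ^ 3 - 24 * x < 0 := by
  have hπl : (3.141592 : ℝ) < π := Real.pi_gt_d6
  have hπu : π < (3.141593 : ℝ) := Real.pi_lt_d6
  have hp2l : (9.8696 : ℝ) ≤ π^2 := by nlinarith
  have hp2u : π^2 ≤ (9.869607 : ℝ) := by nlinarith
  have hp3l : (31.00625 : ℝ) ≤ π^3 := by nlinarith [mul_le_mul_of_nonneg_left hp2l Real.pi_pos.le]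
  have hp3u : π^3 ≤ (31.00634 : ℝ) := by nlinarith [mul_le_mul_of_nonneg_left hp2u Real.pi_pos.le]
  have hp4l : (97.409 : ℝ) ≤ π^4 := by nlinarith [sq_nonneg (π^2 - 9.8696)]
  have hp4u : π^4 ≤ (97.40915 : ℝ) := by
    nlinarith [sq_nonneg (π^2 - 9.869607), sq_nonneg (π^2 + 9.869607)]
  rcases le_or_gt x 1.35 with hc | hc
  · -- region near 0
    have hs_lb := my_sin_lb hx.le
    have hs_ub := my_sin_ub hx.le
    have hc_lb := my_cos_lb hx.le
    have hs0 : 0 ≤ Real.sin x := Real.sin_nonneg_of_nonneg_of_le_pi hx.le (by linarith)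
    rw [Real.cos_sq']
    have ht0 : (0:ℝ) ≤ x^2 := sq_nonneg x
    have ht1 : x^2 ≤ 1.8225 := by nlinarith
    have hd0 : -π/15 + π^2/15 - π^3/60 ≤ -0.0682 := by linarith
    have hd1 : -2/3 + 41*π/180 - π^2/180 + π^3/720 ≤ 0.03716 := by linarith
    have hd2 : (1:ℝ)/15 - π/45 ≤ -0.003146 := by linarith
    have hd3 : -(1:ℝ)/600 + π/1800 ≤ 0.000079 := by linarith
    have hH : (-π/15 + π^2/15 - π^3/60) + x^2*(-2/3 + 41*π/180 - π^2/180 + π^3/720)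
        + (x^2)^2*(1/15 - π/45) + (x^2)^3*(-1/600 + π/1800) < 0 := by
      linarith [sq_nonneg (x^2 - 1.8225),
        mul_nonneg ht0 (mul_nonneg (sub_nonneg.2 ht1) (by linarith : (0:ℝ) ≤ 1.8225 + x^2)),
        mul_le_mul_of_nonneg_left hd1 ht0,
        mul_le_mul_of_nonneg_left hd2 (sq_nonneg (x^2)),
        mul_le_mul_of_nonneg_left hd3 (pow_nonneg ht0 3),
        pow_nonneg ht0 3]
    have hP : x^5 * ((-π/15 + π^2/15 - π^3/60) + x^2*(-2/3 + 41*π/180 - π^2/180 + π^3/720)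
        + (x^2)^2*(1/15 - π/45) + (x^2)^3*(-1/600 + π/1800)) < 0 :=
      mul_neg_of_pos_of_neg (by positivity) hH
    have hA : 0 < (-16*π+48)*x^2 + 3*π*(π-2)^2 := by nlinarith [sq_nonneg x]
    have e1 : 0 ≤ 8*x*(π-3) * ((x - x^3/6 + x^5/120)^2 - Real.sin x^2) := by
      apply mul_nonneg (mul_nonneg (by linarith : (0:ℝ) ≤ 8*x) (by linarith : (0:ℝ) ≤ π - 3))
      nlinarith [mul_nonneg (sub_nonneg.2 hs_ub)
        (by linarith : (0:ℝ) ≤ (x - x^3/6 + x^5/120) + Real.sin x)]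
    have e2 : 0 ≤ π*x*(π-2)^2 * (Real.cos x - (1 - x^2/2 + x^4/24 - x^6/720)) :=
      mul_nonneg (mul_nonneg (mul_nonneg Real.pi_pos.le hx.le) (sq_nonneg _)) (by linarith)
    have e3 : 0 ≤ ((-16*π+48)*x^2 + 3*π*(π-2)^2) * ((x - x^3/6 + x^5/120) - Real.sin x) :=
      mul_nonneg hA.le (by linarith)
    linarith [e1, e2, e3, hP]
  · -- region near π/2
    obtain ⟨y, hy_def⟩ : ∃ y, y = π/2 - x := ⟨_, rfl⟩
    have hx_eq : x = π/2 - y := by rw [hy_def]; ring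
    have hy0 : 0 < y := by rw [hy_def]; linarith
    have hy1 : y ≤ 0.221 := by rw [hy_def]; linarith
    rw [hx_eq, Real.sin_pi_div_two_sub, Real.cos_pi_div_two_sub]
    have hc1 : 24 - 48*π + 24*π^2 - 2*π^3 - π^4/2 ≤ -0.6428 := by linarith
    have hc2 : 48 - 42*π + 4*π^2 + 3/2*π^3 ≤ 2.042 := by linarith
    have hc3 : 24*π - 23/3*π^2 - π^3/3 + π^4/12 ≤ 0 := by linarith
    have hc4 : -24 + 23/6*π + 2*π^2 - 5/24*π^3 ≤ 1.33 := by linarith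
    have hc5 : 8 - 14/3*π + 2/3*π^2 ≤ 0 := by linarith
    have hc6 : 2 - π/3 - π^2/9 ≤ 0 := by linarith
    have hc7 : -(2:ℝ)/3 + 2/9*π ≤ 0.032 := by linarith
    have hy2 : y^2 ≤ 0.048841 := by nlinarith
    have hy3 : y^3 ≤ 0.0108 := by nlinarith [mul_le_mul_of_nonneg_left hy2 hy0.le]
    have hy4 : y^4 ≤ 0.00239 := by
      nlinarith [mul_nonneg (sub_nonneg.2 hy2)
        (by linarith [sq_nonneg y] : (0:ℝ) ≤ 0.048841 + y^2)]
    have hy6 : y^6 ≤ 0.00012 := by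
      have h := mul_le_mul hy4 hy2 (sq_nonneg y) (by norm_num : (0:ℝ) ≤ 0.00239)
      nlinarith [h]
    have hK : (24 - 48*π + 24*π^2 - 2*π^3 - π^4/2) + y*(48 - 42*π + 4*π^2 + 3/2*π^3)
        + y^2*(24*π - 23/3*π^2 - π^3/3 + π^4/12) + y^3*(-24 + 23/6*π + 2*π^2 - 5/24*π^3)
        + y^4*(8 - 14/3*π + 2/3*π^2) + y^5*(2 - π/3 - π^2/9) + y^6*(-2/3 + 2/9*π) < 0 := by
      linarith [mul_le_mul_of_nonneg_left hc2 hy0.le,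
        mul_le_mul_of_nonneg_left hc3 (sq_nonneg y),
        mul_le_mul_of_nonneg_left hc4 (pow_nonneg hy0.le 3),
        mul_le_mul_of_nonneg_left hc5 (pow_nonneg hy0.le 4),
        mul_le_mul_of_nonneg_left hc6 (pow_nonneg hy0.le 5),
        mul_le_mul_of_nonneg_left hc7 (pow_nonneg hy0.le 6),
        pow_nonneg hy0.le 6, hy3, hy6, hy1, hy0.le]
    have hQ : y * ((24 - 48*π + 24*π^2 - 2*π^3 - π^4/2) + y*(48 - 42*π + 4*π^2 + 3/2*π^3)
        + y^2*(24*π - 23/3*π^2 - π^3/3 + π^4/12) + y^3*(-24 + 23/6*π + 2*π^2 - 5/24*π^3)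
        + y^4*(8 - 14/3*π + 2/3*π^2) + y^5*(2 - π/3 - π^2/9) + y^6*(-2/3 + 2/9*π)) < 0 :=
      mul_neg_of_pos_of_neg hy0 hK
    have hs_lb := my_sin_lb hy0.le
    have hs_ub := my_sin_ub hy0.le
    have hc_ub := my_cos_ub hy0.le
    have hsl0 : 0 ≤ y - y^3/6 := by nlinarith
    have hxpos : (0:ℝ) < π/2 - y := by linarith
    have e1 : 0 ≤ 8*(π/2-y)*(π-3) * (Real.sin y^2 - (y - y^3/6)^2) := by
      apply mul_nonneg (mul_nonneg (by linarith : (0:ℝ) ≤ 8*(π/2-y)) (by linarith : (0:ℝ) ≤ π - 3))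
      nlinarith [mul_nonneg (sub_nonneg.2 hs_lb)
        (by linarith : (0:ℝ) ≤ Real.sin y + (y - y^3/6))]
    have e2 : 0 ≤ π*(π/2-y)*(π-2)^2 * (Real.sin y - (y - y^3/6)) :=
      mul_nonneg (mul_nonneg (mul_nonneg Real.pi_pos.le hxpos.le) (sq_nonneg _)) (by linarith)
    have hA : 0 < (-16*π+48)*(π/2-y)^2 + 3*π*(π-2)^2 := by
      nlinarith [sq_nonneg (π/2-y), sq_nonneg y]
    have e3 : 0 ≤ ((-16*π+48)*(π/2-y)^2 + 3*π*(π-2)^2) * ((1 - y^2/2 + y^4/24) - Real.cos y) :=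
      mul_nonneg hA.le (by linarith)
    linarith [e1, e2, e3, hQ]
end

section
/- For all real x with 0 < x < π/2, one has f₄(x) < 0, where f₄(x) := −4x²(π − 3)·sin x·cos x + 3π·sin x + 2x(x² − 1)(π − 3)·cos² x − πx·cos x − 6x. -/
open Real Set

lemma mono_aux {f f' : ℝ → ℝ} (hd : ∀ t, HasDerivAt f (f' t) t)
    (hnn : ∀ t, t ∈ Ioo (0:ℝ) 2 → 0 ≤ f' t) {y : ℝ} (hy : 0 ≤ y) (hy' : y ≤ 2) :
    f 0 ≤ f y := by
  have hmono : MonotoneOn f (Icc (0:ℝ) 2) := by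
    apply monotoneOn_of_deriv_nonneg (convex_Icc 0 2)
    · exact fun t _ => (hd t).continuousAt.continuousWithinAt
    · intro t ht
      exact ((hd t).differentiableAt).differentiableWithinAt
    · intro t ht
      rw [interior_Icc] at ht
      rw [(hd t).deriv]
      exact hnn t ht
  exact hmono ⟨le_refl 0, by norm_num⟩ ⟨hy, hy'⟩ hy

lemma L3 {y : ℝ} (hy : 0 ≤ y) (hy' : y ≤ 2) : y - y^3/6 ≤ Real.sin y := by
  have h := mono_aux (f := fun t => Real.sin t - (t - t^3/6))
    (f' := fun t => Real.cos t - (1 - 3*t^2/6))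
    (fun t => ((Real.hasDerivAt_sin t).sub ((hasDerivAt_id t).sub
      ((hasDerivAt_pow 3 t).div_const 6))))
    (fun t ht => by linarith [Real.one_sub_sq_div_two_le_cos (x := t)]) hy hy'
  simp at h; linarith

lemma L4 {y : ℝ} (hy : 0 ≤ y) (hy' : y ≤ 2) : Real.cos y ≤ 1 - y^2/2 + y^4/24 := by
  have h := mono_aux (f := fun t => 1 - t^2/2 + t^4/24 - Real.cos t)
    (f' := fun t => -(2*t/2) + 4*t^3/24 - (-Real.sin t))
    (fun t => ((((hasDerivAt_const t (1:ℝ)).sub ((hasDerivAt_pow 2 t).div_const 2)).add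
      ((hasDerivAt_pow 4 t).div_const 24)).sub (Real.hasDerivAt_cos t)).congr_deriv (by ring))
    (fun t ht => by linarith [L3 ht.1.le (by linarith [ht.2])]) hy hy'
  simp at h; linarith

lemma L5 {y : ℝ} (hy : 0 ≤ y) (hy' : y ≤ 2) : Real.sin y ≤ y - y^3/6 + y^5/120 := by
  have h := mono_aux (f := fun t => t - t^3/6 + t^5/120 - Real.sin t)
    (f' := fun t => 1 - 3*t^2/6 + 5*t^4/120 - Real.cos t)
    (fun t => ((((hasDerivAt_id t).sub ((hasDerivAt_pow 3 t).div_const 6)).add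
      ((hasDerivAt_pow 5 t).div_const 120)).sub (Real.hasDerivAt_sin t)).congr_deriv (by ring))
    (fun t ht => by linarith [L4 ht.1.le (by linarith [ht.2])]) hy hy'
  simp at h; linarith

lemma L6 {y : ℝ} (hy : 0 ≤ y) (hy' : y ≤ 2) :
    1 - y^2/2 + y^4/24 - y^6/720 ≤ Real.cos y := by
  have h := mono_aux (f := fun t => Real.cos t - (1 - t^2/2 + t^4/24 - t^6/720))
    (f' := fun t => -Real.sin t - (-(2*t/2) + 4*t^3/24 - 6*t^5/720))
    (fun t => ((Real.hasDerivAt_cos t).sub ((((hasDerivAt_const t (1:ℝ)).sub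
      ((hasDerivAt_pow 2 t).div_const 2)).add ((hasDerivAt_pow 4 t).div_const 24)).sub
      ((hasDerivAt_pow 6 t).div_const 720))).congr_deriv (by ring))
    (fun t ht => by linarith [L5 ht.1.le (by linarith [ht.2])]) hy hy'
  simp at h; linarith

lemma L7 {y : ℝ} (hy : 0 ≤ y) (hy' : y ≤ 2) : 0 ≤ Real.sin y - y * Real.cos y := by
  have h := mono_aux (f := fun t => Real.sin t - t * Real.cos t)
    (f' := fun t => Real.cos t - (1 * Real.cos t + t * -Real.sin t))
    (fun t => (Real.hasDerivAt_sin t).sub ((hasDerivAt_id t).mul (Real.hasDerivAt_cos t)))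
    (fun t ht => by
      have hs : 0 ≤ Real.sin t :=
        Real.sin_nonneg_of_nonneg_of_le_pi ht.1.le (by nlinarith [Real.pi_gt_three, ht.2])
      linarith [mul_nonneg ht.1.le hs]) hy hy'
  simp at h; linarith

lemma L8 {y : ℝ} (hy : 0 ≤ y) (hy' : y ≤ 2) : Real.sin y - y * Real.cos y ≤ y^3/3 := by
  have h := mono_aux (f := fun t => t^3/3 - (Real.sin t - t * Real.cos t))
    (f' := fun t => 3*t^2/3 - (Real.cos t - (1 * Real.cos t + t * -Real.sin t)))
    (fun t => ((hasDerivAt_pow 3 t).div_const 3).sub ((Real.hasDerivAt_sin t).sub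
      ((hasDerivAt_id t).mul (Real.hasDerivAt_cos t))))
    (fun t ht => by linarith [mul_le_mul_of_nonneg_left (Real.sin_le ht.1.le) ht.1.le]) hy hy'
  simp at h; linarith
set_option maxHeartbeats 4000000 in
theorem f4_neg (x : ℝ) (hx : 0 < x) (hx' : x < π / 2) :
    -4 * x ^ 2 * (π - 3) * sin x * cos x + 3 * π * sin x +
        2 * x * (x ^ 2 - 1) * (π - 3) * cos x ^ 2 - π * x * cos x - 6 * x < 0 := by
  have hpl : 3.141592 < π := Real.pi_gt_d6
  have hpu : π < 3.141593 := Real.pi_lt_d6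
  have hx2 : x ≤ 2 := by linarith
  have hF : 0 < π*x*(2+cos x) - 3*π*sin x - 2*(π-3)*x*(sin x - x*cos x)^2 := by
    rcases le_or_gt x (6/5) with hc | hc
    · have h5 := L5 hx.le hx2
      have h6 := L6 hx.le hx2
      have h7 := L7 hx.le hx2
      have h8 := L8 hx.le hx2
      have ht2 : (sin x - x*cos x)^2 ≤ (x^3/3)^2 := pow_le_pow_left₀ h7 h8 2
      have hxp : 0 ≤ 2*(π-3)*x := mul_nonneg (by linarith : (0:ℝ) ≤ 2*(π-3)) hx.le
      have hstep : 0 ≤ 2*(π-3)*x*((x^3/3)^2 - (sin x - x*cos x)^2) :=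
        mul_nonneg hxp (by linarith)
      have e1 : 0 ≤ π*x*(cos x - (1 - x^2/2 + x^4/24 - x^6/720)) :=
        mul_nonneg (mul_nonneg Real.pi_pos.le hx.le) (by linarith)
      have e2 : 0 ≤ 3*π*((x - x^3/6 + x^5/120) - sin x) :=
        mul_nonneg (by positivity) (by linarith)
      have hx2' : x^2 ≤ (6/5:ℝ)^2 := pow_le_pow_left₀ hx.le hc 2
      have hfac : 0 < π/60 - x^2*(π/720 + 2*(π-3)/9) := by
        linarith only [hpu, hpl,
          mul_nonneg (by linarith only [hx2'] : (0:ℝ) ≤ (6/5)^2 - x^2)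
            (by linarith only [hpl] : (0:ℝ) ≤ π/720 + 2*(π-3)/9)]
      have hpos : 0 < x^5 * (π/60 - x^2*(π/720 + 2*(π-3)/9)) :=
        mul_pos (by positivity) hfac
      have hid1 : π*(x*(2+(1 - x^2/2 + x^4/24 - x^6/720)) - 3*(x - x^3/6 + x^5/120))
          - 2*(π-3)*x*(x^3/3)^2 = x^5*(π/60 - x^2*(π/720 + 2*(π-3)/9)) := by ring
      linarith only [hstep, e1, e2, hpos, hid1]
    · obtain ⟨u, rfl⟩ : ∃ u, x = π/2 - u := ⟨π/2 - x, by ring⟩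
      have hu : 0 < u := by linarith
      have hu2 : u ≤ 2 := by linarith
      have huu : u ≤ 0.3708 := by linarith
      have hxnn : (0:ℝ) ≤ π/2 - u := hx.le
      rw [Real.sin_pi_div_two_sub, Real.cos_pi_div_two_sub]
      have h3 := L3 hu.le hu2
      have h4 := L4 hu.le hu2
      have h7 := L7 hx.le hx2
      rw [Real.sin_pi_div_two_sub, Real.cos_pi_div_two_sub] at h7
      have hB : cos u - (π/2-u)*sin u ≤ 1 - u^2/2 + u^4/24 - (π/2-u)*(u - u^3/6) := by
        linarith [mul_le_mul_of_nonneg_left h3 hxnn, h4]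
      have ht2 : (cos u - (π/2-u)*sin u)^2
          ≤ (1 - u^2/2 + u^4/24 - (π/2-u)*(u - u^3/6))^2 := pow_le_pow_left₀ h7 hB 2
      have e3 : 0 ≤ π*(π/2-u)*(sin u - (u - u^3/6)) :=
        mul_nonneg (mul_nonneg Real.pi_pos.le hxnn) (by linarith)
      have e4 : 0 ≤ 3*π*((1 - u^2/2 + u^4/24) - cos u) :=
        mul_nonneg (by positivity) (by linarith)
      have e5 : 0 ≤ 2*(π-3)*(π/2-u)*((1 - u^2/2 + u^4/24 - (π/2-u)*(u - u^3/6))^2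
          - (cos u - (π/2-u)*sin u)^2) :=
        mul_nonneg (mul_nonneg (by linarith : (0:ℝ) ≤ 2*(π-3)) hxnn) (by linarith)
      have hQ : 0 < (-6 - 5/2*π^2 + π^3)
          + u*(19/2*π - 3*π^2 + 3/4*π^3 - 1/4*π^4)
          + u^2*(-6 + 2*π - 31/12*π^2 + 5/6*π^3)
          + u^3*(49/24*π - 2/3*π^2 - 1/4*π^3 + 1/12*π^4)
          + u^4*(9/8*π^2 - 3/8*π^3)
          + u^5*(-13/8*π + 13/24*π^2 + 1/48*π^3 - 1/144*π^4)
          + u^6*(3/4 - 1/4*π - 5/48*π^2 + 5/144*π^3)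
          + u^7*(11/64*π - 11/192*π^2)
          + u^8*(-3/32 + 1/32*π) := by
        have hp2l : (9.8696002:ℝ) < π^2 := by
          linarith only [hpl, sq_nonneg (π - 3.141592)]
        have hp2u : π^2 < 9.8696066 := by
          linarith only [hpl, hpu, mul_pos (sub_pos.2 hpu) (sub_pos.2 hpl)]
        have hp3l : (31.006257:ℝ) < π^3 := by
          linarith only [hpl, hp2l, mul_pos (sub_pos.2 hpl) (sub_pos.2 hp2l)]
        have hp3u : π^3 < 31.0062871 := by
          linarith only [hp2u, mul_nonneg (by linarith only [hpu] : (0:ℝ) ≤ 3.141593 - π) (sq_nonneg π)]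
        have hp4l : (97.4090081:ℝ) < π^4 := by
          linarith only [hp2l, sq_nonneg (π^2 - 9.8696002)]
        have hp4u : π^4 < 97.4091345 := by
          linarith only [hp2u, mul_pos (sub_pos.2 hp2u) (by positivity : (0:ℝ) < π^2 + 9.8696066)]
        have hb0 : (0.33224:ℝ) ≤ -6 - 5/2*π^2 + π^3 := by linarith
        have hb1 : (-0.86129:ℝ) ≤ 19/2*π - 3*π^2 + 3/4*π^3 - 1/4*π^4 := by linarith
        have hb2 : (0.62524:ℝ) ≤ -6 + 2*π - 31/12*π^2 + 5/6*π^3 := by linarith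
        have hb3 : (0.20019:ℝ) ≤ 49/24*π - 2/3*π^2 - 1/4*π^3 + 1/12*π^4 := by linarith
        have hb4 : (-0.52406:ℝ) ≤ 9/8*π^2 - 3/8*π^3 := by linarith
        have hb5 : (0.21045:ℝ) ≤ -13/8*π + 13/24*π^2 + 1/48*π^3 - 1/144*π^4 := by linarith
        have hb6 : (0.01312:ℝ) ≤ 3/4 - 1/4*π - 5/48*π^2 + 5/144*π^3 := by linarith
        have hb7 : (-0.02549:ℝ) ≤ 11/64*π - 11/192*π^2 := by linarith
        have hb8 : (0.00442:ℝ) ≤ -3/32 + 1/32*π := by linarith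
        have hu4 : u^4 ≤ (0.3708:ℝ)^4 := pow_le_pow_left₀ hu.le huu 4
        have k1 : (0:ℝ) ≤ u^3*(0.3708 - u) := mul_nonneg (pow_nonneg hu.le 3) (by linarith)
        have k2 : (0:ℝ) ≤ u^3*((0.3708:ℝ)^4 - u^4) :=
          mul_nonneg (pow_nonneg hu.le 3) (by linarith)
        have hR : (0:ℝ) < 0.33224 - 0.86129*u + 0.62524*u^2 + 0.20019*u^3
            - 0.52406*u^4 + 0.21045*u^5 + 0.01312*u^6 - 0.02549*u^7 + 0.00442*u^8 := by
          linarith only [sq_nonneg (u - 0.6889), k1, k2, hu.le, pow_nonneg hu.le 3,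
            pow_nonneg hu.le 5, pow_nonneg hu.le 6, pow_nonneg hu.le 8]
        have m1 := mul_nonneg hu.le (by linarith : (0:ℝ) ≤ (19/2*π - 3*π^2 + 3/4*π^3 - 1/4*π^4) - (-0.86129))
        have m2 := mul_nonneg (pow_nonneg hu.le 2) (by linarith : (0:ℝ) ≤ (-6 + 2*π - 31/12*π^2 + 5/6*π^3) - 0.62524)
        have m3 := mul_nonneg (pow_nonneg hu.le 3) (by linarith : (0:ℝ) ≤ (49/24*π - 2/3*π^2 - 1/4*π^3 + 1/12*π^4) - 0.20019)
        have m4 := mul_nonneg (pow_nonneg hu.le 4) (by linarith : (0:ℝ) ≤ (9/8*π^2 - 3/8*π^3) - (-0.52406))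
        have m5 := mul_nonneg (pow_nonneg hu.le 5) (by linarith : (0:ℝ) ≤ (-13/8*π + 13/24*π^2 + 1/48*π^3 - 1/144*π^4) - 0.21045)
        have m6 := mul_nonneg (pow_nonneg hu.le 6) (by linarith : (0:ℝ) ≤ (3/4 - 1/4*π - 5/48*π^2 + 5/144*π^3) - 0.01312)
        have m7 := mul_nonneg (pow_nonneg hu.le 7) (by linarith : (0:ℝ) ≤ (11/64*π - 11/192*π^2) - (-0.02549))
        have m8 := mul_nonneg (pow_nonneg hu.le 8) (by linarith : (0:ℝ) ≤ (-3/32 + 1/32*π) - 0.00442)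
        linarith only [hR, hb0, m1, m2, m3, m4, m5, m6, m7, m8]
      have hid : π*(π/2-u)*(2+(u-u^3/6)) - 3*π*(1 - u^2/2 + u^4/24)
          - 2*(π-3)*(π/2-u)*(1 - u^2/2 + u^4/24 - (π/2-u)*(u - u^3/6))^2
          = u * ((-6 - 5/2*π^2 + π^3)
          + u*(19/2*π - 3*π^2 + 3/4*π^3 - 1/4*π^4)
          + u^2*(-6 + 2*π - 31/12*π^2 + 5/6*π^3)
          + u^3*(49/24*π - 2/3*π^2 - 1/4*π^3 + 1/12*π^4)
          + u^4*(9/8*π^2 - 3/8*π^3)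
          + u^5*(-13/8*π + 13/24*π^2 + 1/48*π^3 - 1/144*π^4)
          + u^6*(3/4 - 1/4*π - 5/48*π^2 + 5/144*π^3)
          + u^7*(11/64*π - 11/192*π^2)
          + u^8*(-3/32 + 1/32*π)) := by ring
      linarith only [e3, e4, e5, mul_pos hu hQ, hid]
  have hpy : sin x^2 + cos x^2 = 1 := Real.sin_sq_add_cos_sq x
  have h0 : -4 * x ^ 2 * (π - 3) * sin x * cos x + 3 * π * sin x +
        2 * x * (x ^ 2 - 1) * (π - 3) * cos x ^ 2 - π * x * cos x - 6 * x
      = -(π*x*(2+cos x) - 3*π*sin x - 2*(π-3)*x*(sin x - x*cos x)^2)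
        + 2*x*(π-3)*(1 - (sin x^2 + cos x^2)) := by ring
  rw [h0, hpy]
  linarith [hF]
end

section
/- The sequence c_k := (a_k)/(b_k), where a_k := (4·|B_{2k+2}|/(2k+2)!)·(2k·2^(2k) − 2·2^(2k) + k + 2) and b_k := (3·|B_{2k}|/(2k)!)·(2k·2^(2k) − 3·2^(2k) + 4), is strictly decreasing for integers k ≥ 2; that is, c_{k+1} < c_k for all k ≥ 2. -/
open Real

noncomputable def Zc (k : ℕ) : ℝ := ∑' n : ℕ, 1 / (n : ℝ) ^ (2 * k)

lemma Zc_hasSum (k : ℕ) (hk : 1 ≤ k) :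
    HasSum (fun n : ℕ => 1 / (n : ℝ) ^ (2 * k)) (Zc k) :=
  (hasSum_zeta_nat (by omega)).summable.hasSum

lemma Zc_ge_one (k : ℕ) (hk : 1 ≤ k) : 1 ≤ Zc k := by
  have h := Zc_hasSum k hk
  have := le_hasSum h 1 (fun j _ => by positivity)
  simpa using this

lemma Zc_antitone (k : ℕ) (hk : 1 ≤ k) : Zc (k + 1) ≤ Zc k := by
  refine Summable.tsum_le_tsum (fun n => ?_) (Zc_hasSum (k+1) (by omega)).summable
    (Zc_hasSum k hk).summable
  rcases Nat.eq_zero_or_pos n with h | h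
  · subst h
    simp [zero_pow, (by omega : 2 * (k+1) ≠ 0), (by omega : 2 * k ≠ 0)]
  · apply div_le_div_of_nonneg_left (by norm_num) (by positivity)
    have h1 : (1:ℝ) ≤ (n:ℝ) := by exact_mod_cast h
    exact pow_le_pow_right₀ h1 (by omega)

lemma nat_pow_bound (k n : ℕ) (hk : 2 ≤ k) :
    4 ^ k * (n + 1) ^ 2 ≤ (n + 2) ^ (2 * k) := by
  obtain ⟨m, rfl⟩ : ∃ m, k = m + 2 := ⟨k - 2, by omega⟩
  have e : (n + 2) ^ 2 = n * n + 4 * n + 4 := by ring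
  have h1 : 4 ^ m ≤ ((n + 2) ^ 2) ^ m := Nat.pow_le_pow_left (by omega) m
  have h0 : 4 * (n + 1) ≤ (n + 2) ^ 2 := by omega
  have h2 : 16 * (n + 1) ^ 2 ≤ (n + 2) ^ 4 := by
    calc 16 * (n + 1) ^ 2 = (4 * (n + 1)) ^ 2 := by ring
      _ ≤ ((n + 2) ^ 2) ^ 2 := Nat.pow_le_pow_left h0 2
      _ = (n + 2) ^ 4 := by rw [← pow_mul]
  calc 4 ^ (m + 2) * (n + 1) ^ 2 = 4 ^ m * (16 * (n + 1) ^ 2) := by ring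
    _ ≤ ((n + 2) ^ 2) ^ m * (n + 2) ^ 4 := Nat.mul_le_mul h1 h2
    _ = (n + 2) ^ (2 * (m + 2)) := by rw [← pow_mul, ← pow_add]; ring_nf

lemma Zc_upper (k : ℕ) (hk : 2 ≤ k) : Zc k ≤ 1 + 5 / (3 * 4 ^ k) := by
  have hS := Zc_hasSum k (by omega)
  have h2 : HasSum (fun n : ℕ => 1 / ((n : ℝ) + 2) ^ (2 * k))
      (Zc k - 1) := by
    have := (hasSum_nat_add_iff' (f := fun n : ℕ => 1 / (n : ℝ) ^ (2 * k)) 2).mpr hS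
    simp only [Finset.sum_range_succ, Finset.sum_range_zero] at this
    rw [Nat.cast_zero, Nat.cast_one, zero_pow (by omega), one_pow] at this
    simpa [add_comm] using this.congr_fun (fun n => by push_cast; norm_num)
  have h3 : HasSum (fun n : ℕ => (1 / (4:ℝ) ^ k) * (1 / ((n : ℝ) + 1) ^ 2))
      ((1 / (4:ℝ) ^ k) * (π ^ 2 / 6)) := by
    have h30 : HasSum (fun n : ℕ => 1 / ((n : ℝ) + 1) ^ 2) (π ^ 2 / 6) := by
      have := (hasSum_nat_add_iff' (f := fun n : ℕ => 1 / (n : ℝ) ^ 2) 1).mpr hasSum_zeta_two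
      simp only [Finset.sum_range_one] at this
      rw [Nat.cast_zero, zero_pow (by omega)] at this
      simpa using this.congr_fun (fun n => by push_cast; norm_num)
    exact h30.mul_left _
  have hle : Zc k - 1 ≤ (1 / (4:ℝ) ^ k) * (π ^ 2 / 6) := by
    refine hasSum_le (fun n => ?_) h2 h3
    have hb := nat_pow_bound k n hk
    have hb' : (4:ℝ) ^ k * ((n : ℝ) + 1) ^ 2 ≤ ((n : ℝ) + 2) ^ (2 * k) := by
      exact_mod_cast hb
    rw [div_mul_div_comm, one_mul]
    apply one_div_le_one_div_of_le (by positivity) hb'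
  have hpi : π ^ 2 ≤ 10 := by nlinarith [pi_lt_d2, pi_pos]
  have h4 : (0:ℝ) < 4 ^ k := by positivity
  have : (1 / (4:ℝ) ^ k) * (π ^ 2 / 6) ≤ 5 / (3 * 4 ^ k) := by
    rw [div_mul_div_comm, one_mul, div_le_div_iff₀ (by positivity) (by positivity)]
    nlinarith
  linarith

lemma bern_abs (k : ℕ) (hk : 1 ≤ k) :
    |(bernoulli (2 * k) : ℝ)| = 2 * Zc k / (2 * π) ^ (2 * k) * (Nat.factorial (2 * k)) := by
  have hfact : (0:ℝ) < (Nat.factorial (2 * k)) := by positivity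
  have key : |(bernoulli (2 * k) : ℝ)| / (Nat.factorial (2 * k))
      = 2 * Zc k / (2 * π) ^ (2 * k) := by
    have hZv : Zc k = (-1 : ℝ) ^ (k + 1) * (2 : ℝ) ^ (2 * k - 1) * π ^ (2 * k) *
        bernoulli (2 * k) / (Nat.factorial (2 * k)) := (hasSum_zeta_nat (by omega)).tsum_eq
    have h2 : (2:ℝ) * 2 ^ (2 * k - 1) = 2 ^ (2 * k) := by
      rw [← pow_succ']
      congr 1
      omega
    have hrhs : 2 * Zc k / (2 * π) ^ (2 * k)
        = (-1 : ℝ) ^ (k + 1) * (bernoulli (2 * k) : ℝ) / (Nat.factorial (2 * k)) := by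
      rw [hZv, mul_pow]
      field_simp
      rw [← h2]
      ring
    have hpos : 0 < 2 * Zc k / (2 * π) ^ (2 * k) := by
      have := Zc_ge_one k hk
      have hp : (0:ℝ) < (2 * π) ^ (2 * k) := by positivity
      positivity
    rw [hrhs] at hpos ⊢
    rw [← abs_of_pos hpos, abs_div, abs_mul, abs_pow, abs_neg, abs_one, one_pow, one_mul,
      abs_of_pos hfact]
  rw [div_mul_eq_mul_div, eq_div_iff (by positivity : ((2 * π) ^ (2 * k) : ℝ) ≠ 0)]
  field_simp at key
  linarith [key]

lemma four_pow_lb (k : ℕ) (hk : 2 ≤ k) : 3 * k ^ 2 ≤ 4 ^ k := by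
  induction k, hk using Nat.le_induction with
  | base => norm_num
  | succ n hn ih =>
    have : 3 * (n + 1) ^ 2 ≤ 4 * (3 * n ^ 2) := by nlinarith
    calc 3 * (n + 1) ^ 2 ≤ 4 * (3 * n ^ 2) := this
      _ ≤ 4 * 4 ^ n := by omega
      _ = 4 ^ (n + 1) := by rw [pow_succ]; ring

lemma core_ineq (k : ℕ) (hk : 2 ≤ k) :
    (1 + 5 / (3 * (2:ℝ) ^ (2 * k))) *
      ((2 * ((k:ℝ) + 1) * 2 ^ (2 * (k + 1)) - 2 * 2 ^ (2 * (k + 1)) + ((k:ℝ) + 1) + 2) *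
       (2 * (k:ℝ) * 2 ^ (2 * k) - 3 * 2 ^ (2 * k) + 4)) <
      (2 * (k:ℝ) * 2 ^ (2 * k) - 2 * 2 ^ (2 * k) + (k:ℝ) + 2) *
      (2 * ((k:ℝ) + 1) * 2 ^ (2 * (k + 1)) - 3 * 2 ^ (2 * (k + 1)) + 4) := by
  have hx4 : (2:ℝ) ^ (2 * k) = 4 ^ k := by rw [pow_mul]; norm_num
  have hx1 : (2:ℝ) ^ (2 * (k + 1)) = 4 * 2 ^ (2 * k) := by
    rw [show 2 * (k + 1) = 2 * k + 2 by ring, pow_add]; ring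
  set x : ℝ := (2:ℝ) ^ (2 * k) with hxdef
  set K : ℝ := (k:ℝ) with hKdef
  have hK2 : (2:ℝ) ≤ K := by
    rw [hKdef]; exact_mod_cast hk
  have hx16 : (16:ℝ) ≤ x := by
    rw [hx4]
    calc (16:ℝ) = 4 ^ 2 := by norm_num
      _ ≤ 4 ^ k := by apply pow_le_pow_right₀ (by norm_num) hk
  have hx3k : 3 * K ^ 2 ≤ x := by
    rw [hx4, hKdef]
    exact_mod_cast four_pow_lb k hk
  have hxpos : (0:ℝ) < x := by positivity
  rw [hx1]
  have hA : (1 + 5 / (3 * x)) = (3 * x + 5) / (3 * x) := by field_simp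
  rw [hA, div_mul_eq_mul_div, div_lt_iff₀ (by positivity)]
  nlinarith [mul_nonneg (mul_nonneg (by linarith : (0:ℝ) ≤ x - 3*K^2) (le_of_lt hxpos)) (le_of_lt hxpos),
    mul_nonneg (mul_nonneg (mul_nonneg (by nlinarith : (0:ℝ) ≤ K^2) (le_of_lt hxpos)) (by linarith : (0:ℝ) ≤ x - 16)) (by norm_num : (0:ℝ) ≤ 1),
    mul_nonneg (mul_nonneg (by linarith : (0:ℝ) ≤ K) (le_of_lt hxpos)) (by linarith : (0:ℝ) ≤ x - 16),
    mul_nonneg (mul_nonneg (by linarith : (0:ℝ) ≤ K) (by linarith : (0:ℝ) ≤ x - 16)) (by linarith : (0:ℝ) ≤ x - 16),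
    mul_nonneg (by linarith : (0:ℝ) ≤ x - 16) (by linarith : (0:ℝ) ≤ x - 16)]

set_option maxHeartbeats 1000000 in
theorem c_strictly_decreasing (k : ℕ) (hk : 2 ≤ k) :
    (4 * |(bernoulli (2 * (k + 1) + 2) : ℝ)| / (Nat.factorial (2 * (k + 1) + 2)) *
        (2 * (k + 1) * 2 ^ (2 * (k + 1)) - 2 * 2 ^ (2 * (k + 1)) + (k + 1) + 2)) /
      (3 * |(bernoulli (2 * (k + 1)) : ℝ)| / (Nat.factorial (2 * (k + 1))) *
        (2 * (k + 1) * 2 ^ (2 * (k + 1)) - 3 * 2 ^ (2 * (k + 1)) + 4)) <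
    (4 * |(bernoulli (2 * k + 2) : ℝ)| / (Nat.factorial (2 * k + 2)) *
        (2 * k * 2 ^ (2 * k) - 2 * 2 ^ (2 * k) + k + 2)) /
      (3 * |(bernoulli (2 * k) : ℝ)| / (Nat.factorial (2 * k)) *
        (2 * k * 2 ^ (2 * k) - 3 * 2 ^ (2 * k) + 4)) := by
  have e1 : 2 * (k + 1) + 2 = 2 * (k + 2) := by ring
  have e2 : 2 * k + 2 = 2 * (k + 1) := by ring
  rw [e1, e2, bern_abs (k + 2) (by omega), bern_abs (k + 1) (by omega), bern_abs k (by omega)]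
  -- abbreviations
  set x : ℝ := (2:ℝ) ^ (2 * k) with hxdef
  have hx4 : x = 4 ^ k := by rw [hxdef, pow_mul]; norm_num
  have hx1 : (2:ℝ) ^ (2 * (k + 1)) = 4 * x := by
    rw [hxdef, show 2 * (k + 1) = 2 * k + 2 by ring, pow_add]; ring
  have hK2 : (2:ℝ) ≤ (k:ℝ) := by exact_mod_cast hk
  have hx16 : (16:ℝ) ≤ x := by
    rw [hx4]
    calc (16:ℝ) = 4 ^ 2 := by norm_num
      _ ≤ 4 ^ k := by apply pow_le_pow_right₀ (by norm_num) hk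
  have hxpos : (0:ℝ) < x := by positivity
  -- powers of 2π
  have hy1 : (2 * π) ^ (2 * (k + 1)) = (2 * π) ^ (2 * k) * (2 * π) ^ 2 := by
    rw [show 2 * (k + 1) = 2 * k + 2 from by ring, pow_add]
  have hy2 : (2 * π) ^ (2 * (k + 2)) = (2 * π) ^ (2 * k) * (2 * π) ^ 2 * (2 * π) ^ 2 := by
    rw [show 2 * (k + 2) = 2 * k + 2 + 2 from by ring, pow_add, pow_add]
  set y : ℝ := (2 * π) ^ (2 * k) with hydef
  set c : ℝ := (2 * π) ^ 2 with hcdef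
  have hypos : (0:ℝ) < y := by rw [hydef]; positivity
  have hcpos : (0:ℝ) < c := by rw [hcdef]; positivity
  rw [hy1, hy2, hx1]
  -- factorials
  have hF0 : (0:ℝ) < (Nat.factorial (2 * k)) := by positivity
  have hF1 : (0:ℝ) < (Nat.factorial (2 * (k + 1))) := by positivity
  have hF2 : (0:ℝ) < (Nat.factorial (2 * (k + 2))) := by positivity
  -- Z values
  have hZ0 : 1 ≤ Zc k := Zc_ge_one k (by omega)
  have hZ1 : 1 ≤ Zc (k + 1) := Zc_ge_one (k + 1) (by omega)
  have hZ2 : 1 ≤ Zc (k + 2) := Zc_ge_one (k + 2) (by omega)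
  have hZ21 : Zc (k + 2) ≤ Zc (k + 1) := Zc_antitone (k + 1) (by omega)
  have hZ0u : Zc k ≤ 1 + 5 / (3 * 4 ^ k) := Zc_upper k hk
  -- polynomial factors
  set P0 : ℝ := 2 * (k:ℝ) * x - 2 * x + (k:ℝ) + 2 with hP0
  set Q0 : ℝ := 2 * (k:ℝ) * x - 3 * x + 4 with hQ0
  set P1 : ℝ := 2 * ((k:ℝ) + 1) * (4 * x) - 2 * (4 * x) + ((k:ℝ) + 1) + 2 with hP1
  set Q1 : ℝ := 2 * ((k:ℝ) + 1) * (4 * x) - 3 * (4 * x) + 4 with hQ1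
  have hP0pos : 0 < P0 := by
    rw [hP0]
    linarith [mul_nonneg (show (0:ℝ) ≤ 2 * (k:ℝ) - 2 by linarith) hxpos.le]
  have hQ0pos : 0 < Q0 := by
    rw [hQ0]
    linarith [mul_nonneg (show (0:ℝ) ≤ 2 * (k:ℝ) - 3 by linarith) hxpos.le]
  have hP1pos : 0 < P1 := by
    rw [hP1]
    linarith [mul_nonneg (show (0:ℝ) ≤ 8 * (k:ℝ) by linarith) hxpos.le]
  have hQ1pos : 0 < Q1 := by
    rw [hQ1]
    linarith [mul_nonneg (show (0:ℝ) ≤ 8 * (k:ℝ) - 4 by linarith) hxpos.le]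
  -- the key inequality
  have hcore := core_ineq k hk
  rw [hx1] at hcore
  rw [← hxdef] at hcore
  rw [← hP1, ← hQ0, ← hP0, ← hQ1] at hcore
  rw [← hx4] at hZ0u
  have key : Zc (k + 2) * Zc k * (P1 * Q0) < Zc (k + 1) ^ 2 * (P0 * Q1) := by
    have s1 : Zc (k + 2) * Zc k * (P1 * Q0) ≤ Zc (k + 1) * (Zc k * (P1 * Q0)) := by
      have hnn : 0 ≤ Zc k * (P1 * Q0) := by positivity
      nlinarith [mul_le_mul_of_nonneg_right hZ21 hnn]
    have s2 : Zc k * (P1 * Q0) ≤ (1 + 5 / (3 * x)) * (P1 * Q0) := by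
      apply mul_le_mul_of_nonneg_right hZ0u (by positivity)
    have s3 : Zc (k + 1) * (Zc k * (P1 * Q0)) < Zc (k + 1) * (P0 * Q1) := by
      apply mul_lt_mul_of_pos_left _ (by linarith)
      calc Zc k * (P1 * Q0) ≤ (1 + 5 / (3 * x)) * (P1 * Q0) := s2
        _ < P0 * Q1 := hcore
    have s4 : Zc (k + 1) * (P0 * Q1) ≤ Zc (k + 1) ^ 2 * (P0 * Q1) := by
      have h0 : 0 ≤ P0 * Q1 := by positivity
      nlinarith [mul_nonneg (mul_nonneg (by linarith : (0:ℝ) ≤ Zc (k + 1) - 1)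
        (by linarith : (0:ℝ) ≤ Zc (k + 1))) h0]
    linarith
  -- positivity of the two denominators
  have hD1 : 0 < 3 * (2 * Zc (k + 1) / (y * c) * (Nat.factorial (2 * (k + 1)))) /
      (Nat.factorial (2 * (k + 1))) * Q1 := by positivity
  have hD0 : 0 < 3 * (2 * Zc k / y * (Nat.factorial (2 * k))) /
      (Nat.factorial (2 * k)) * Q0 := by positivity
  rw [div_lt_div_iff₀ hD1 hD0]
  have eL : 4 * (2 * Zc (k + 2) / (y * c * c) * (Nat.factorial (2 * (k + 2)))) /
        (Nat.factorial (2 * (k + 2))) * P1 *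
      (3 * (2 * Zc k / y * (Nat.factorial (2 * k))) / (Nat.factorial (2 * k)) * Q0)
      = 48 / (y ^ 2 * c ^ 2) * (Zc (k + 2) * Zc k * (P1 * Q0)) := by
    field_simp
    ring
  have eR : 4 * (2 * Zc (k + 1) / (y * c) * (Nat.factorial (2 * (k + 1)))) /
        (Nat.factorial (2 * (k + 1))) * P0 *
      (3 * (2 * Zc (k + 1) / (y * c) * (Nat.factorial (2 * (k + 1)))) /
        (Nat.factorial (2 * (k + 1))) * Q1)
      = 48 / (y ^ 2 * c ^ 2) * (Zc (k + 1) ^ 2 * (P0 * Q1)) := by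
    field_simp
    ring
  rw [eL, eR]
  apply mul_lt_mul_of_pos_left key (by positivity)
end

section
/- For every positive integer k, the Bernoulli numbers satisfy the double inequality ((2^(2k−1) − 1)·(2k+1)·(2k+2)) / ((2^(2k+1) − 1)·π²) < |B_{2k+2}|/|B_{2k}| < ((2^(2k) − 1)·(2k+1)·(2k+2)) / ((2^(2k+2) − 1)·π²). -/
open Real

private lemma sumZ {s : ℕ} (hs : 2 ≤ s) : Summable (fun n : ℕ => 1 / (n : ℝ) ^ s) :=
  summable_one_div_nat_pow.2 (by omega)

private lemma sumO {s : ℕ} (hs : 2 ≤ s) (c : ℕ) :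
    Summable (fun m : ℕ => 1 / (2 * (m : ℝ) + c) ^ s) := by
  have hi : Function.Injective (fun m : ℕ => 2 * m + c) := fun a b h => by simpa using h
  have h := (sumZ hs).comp_injective hi
  refine h.congr fun m => ?_
  simp only [Function.comp]
  push_cast
  ring_nf

private lemma sumO2 {s : ℕ} (hs : 2 ≤ s) : Summable (fun m : ℕ => 1 / (2 * (m : ℝ) + 2) ^ s) := by
  simpa using sumO hs 2

private lemma sumO3 {s : ℕ} (hs : 2 ≤ s) : Summable (fun m : ℕ => 1 / (2 * (m : ℝ) + 3) ^ s) := by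
  simpa using sumO hs 3

private lemma sumO1 {s : ℕ} (hs : 2 ≤ s) : Summable (fun m : ℕ => 1 / (2 * (m : ℝ) + 1) ^ s) := by
  simpa using sumO hs 1

private lemma shift_even {s : ℕ} (hs : 2 ≤ s) :
    (∑' m : ℕ, 1 / (2 * (m : ℝ)) ^ s) = ∑' m : ℕ, 1 / (2 * (m : ℝ) + 2) ^ s := by
  have hsum : Summable (fun m : ℕ => 1 / (2 * (m : ℝ)) ^ s) := by
    refine (sumO hs 0).congr fun m => by norm_num
  rw [Summable.tsum_eq_zero_add hsum]
  norm_num [zero_pow (by omega : s ≠ 0)]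
  exact tsum_congr fun m => by push_cast; ring_nf

private lemma split {s : ℕ} (hs : 2 ≤ s) :
    (∑' n : ℕ, 1 / (n : ℝ) ^ s) =
      (∑' m : ℕ, 1 / (2 * (m : ℝ) + 1) ^ s) + ∑' m : ℕ, 1 / (2 * (m : ℝ) + 2) ^ s := by
  have he : Summable (fun m : ℕ => 1 / ((2 * m : ℕ) : ℝ) ^ s) := by
    refine (sumO hs 0).congr fun m => by push_cast; ring_nf
  have ho : Summable (fun m : ℕ => 1 / ((2 * m + 1 : ℕ) : ℝ) ^ s) := by
    refine (sumO hs 1).congr fun m => by push_cast; ring_nf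
  rw [← tsum_even_add_odd (f := fun n : ℕ => 1 / (n : ℝ) ^ s) he ho]
  have h1 : (∑' m : ℕ, 1 / ((2 * m : ℕ) : ℝ) ^ s) = ∑' m : ℕ, 1 / (2 * (m : ℝ) + 2) ^ s := by
    rw [← shift_even hs]
    exact tsum_congr fun m => by push_cast; ring_nf
  have h2 : (∑' m : ℕ, 1 / ((2 * m + 1 : ℕ) : ℝ) ^ s) = ∑' m : ℕ, 1 / (2 * (m : ℝ) + 1) ^ s :=
    tsum_congr fun m => by push_cast; ring_nf
  rw [h1, h2]; ring

private lemma E_eq {s : ℕ} (hs : 2 ≤ s) :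
    (∑' m : ℕ, 1 / (2 * (m : ℝ) + 2) ^ s) = (1 / 2 ^ s) * ∑' n : ℕ, 1 / (n : ℝ) ^ s := by
  rw [← shift_even hs, ← tsum_mul_left]
  refine tsum_congr fun m => ?_
  rw [mul_pow]
  by_cases hm : (m : ℝ) = 0
  · simp [hm, zero_pow (by omega : s ≠ 0)]
  · field_simp

private lemma L_eq {s : ℕ} (hs : 2 ≤ s) :
    (∑' m : ℕ, 1 / (2 * (m : ℝ) + 1) ^ s) = 1 + ∑' m : ℕ, 1 / (2 * (m : ℝ) + 3) ^ s := by
  rw [Summable.tsum_eq_zero_add (sumO1 hs)]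
  norm_num
  exact tsum_congr fun m => by push_cast; ring_nf

private lemma eta_eq {s : ℕ} (hs : 2 ≤ s) :
    (∑' n : ℕ, 1 / (n : ℝ) ^ s) * (1 - 2 / 2 ^ s)
      = 1 - ∑' m : ℕ, (1 / (2 * (m : ℝ) + 2) ^ s - 1 / (2 * (m : ℝ) + 3) ^ s) := by
  have hsub : (∑' m : ℕ, (1 / (2 * (m : ℝ) + 2) ^ s - 1 / (2 * (m : ℝ) + 3) ^ s))
      = (∑' m : ℕ, 1 / (2 * (m : ℝ) + 2) ^ s) - ∑' m : ℕ, 1 / (2 * (m : ℝ) + 3) ^ s :=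
    Summable.tsum_sub (sumO2 hs) (sumO3 hs)
  rw [hsub]
  have h1 := split hs
  have h2 := E_eq hs
  have h3 := L_eq hs
  linear_combination h1 + 2 * h2 + h3

private lemma pair_mono (t : ℕ) (x y : ℝ) (hx : 2 ≤ x) (hy : y = x + 1) :
    1 / x ^ (t + 4) - 1 / y ^ (t + 4) ≤ 1 / x ^ (t + 2) - 1 / y ^ (t + 2) := by
  have hx0 : (0:ℝ) < x := by linarith
  have hy0 : (0:ℝ) < y := by nlinarith
  have hxy : x ≤ y := by linarith
  have hxt : x ^ t ≤ y ^ t := pow_le_pow_left₀ hx0.le hxy t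
  have hxt0 : (0:ℝ) < x ^ t := pow_pos hx0 t
  have hyt0 : (0:ℝ) < y ^ t := pow_pos hy0 t
  have hkey : (y ^ 2 - 1) * x ^ 4 ≤ (x ^ 2 - 1) * y ^ 4 := by
    subst hy; nlinarith [sq_nonneg x, sq_nonneg (x-1), sq_nonneg (x+1), sq_nonneg (x*x)]
  have hmain : (y ^ 2 - 1) * x ^ (t + 4) ≤ (x ^ 2 - 1) * y ^ (t + 4) := by
    have e1 : x ^ (t + 4) = x ^ t * x ^ 4 := by ring
    have e2 : y ^ (t + 4) = y ^ t * y ^ 4 := by ring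
    rw [e1, e2]
    have hnn : 0 ≤ (y ^ 2 - 1) * x ^ 4 := mul_nonneg (by nlinarith) (by positivity)
    calc (y ^ 2 - 1) * (x ^ t * x ^ 4) = (y ^ 2 - 1) * x ^ 4 * x ^ t := by ring
      _ ≤ (y ^ 2 - 1) * x ^ 4 * y ^ t := mul_le_mul_of_nonneg_left hxt hnn
      _ ≤ (x ^ 2 - 1) * y ^ 4 * y ^ t := mul_le_mul_of_nonneg_right hkey hyt0.le
      _ = (x ^ 2 - 1) * (y ^ t * y ^ 4) := by ring
  have hd : (y ^ 2 - 1) / y ^ (t + 4) ≤ (x ^ 2 - 1) / x ^ (t + 4) := by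
    rw [div_le_div_iff₀ (by positivity) (by positivity)]
    exact hmain
  have e3 : 1 / x ^ (t + 2) - 1 / x ^ (t + 4) = (x ^ 2 - 1) / x ^ (t + 4) := by
    field_simp; ring
  have e4 : 1 / y ^ (t + 2) - 1 / y ^ (t + 4) = (y ^ 2 - 1) / y ^ (t + 4) := by
    field_simp; ring
  linarith

private lemma pair_strict (t : ℕ) :
    1 / (2:ℝ) ^ (t + 4) - 1 / (3:ℝ) ^ (t + 4) < 1 / (2:ℝ) ^ (t + 2) - 1 / (3:ℝ) ^ (t + 2) := by
  have h2t : (0:ℝ) < 2 ^ t := by positivity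
  have h3t : (0:ℝ) < 3 ^ t := by positivity
  have hle : (2:ℝ) ^ t ≤ 3 ^ t := pow_le_pow_left₀ (by norm_num) (by norm_num) t
  have hmain : ((3:ℝ) ^ 2 - 1) * 2 ^ (t + 4) < ((2:ℝ) ^ 2 - 1) * 3 ^ (t + 4) := by
    have e1 : (2:ℝ) ^ (t + 4) = 2 ^ t * 16 := by ring
    have e2 : (3:ℝ) ^ (t + 4) = 3 ^ t * 81 := by ring
    rw [e1, e2]
    nlinarith
  have hd : ((3:ℝ) ^ 2 - 1) / 3 ^ (t + 4) < ((2:ℝ) ^ 2 - 1) / 2 ^ (t + 4) := by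
    rw [div_lt_div_iff₀ (by positivity) (by positivity)]
    exact hmain
  have e3 : 1 / (2:ℝ) ^ (t + 2) - 1 / 2 ^ (t + 4) = ((2:ℝ) ^ 2 - 1) / 2 ^ (t + 4) := by
    field_simp; ring
  have e4 : 1 / (3:ℝ) ^ (t + 2) - 1 / 3 ^ (t + 4) = ((3:ℝ) ^ 2 - 1) / 3 ^ (t + 4) := by
    field_simp; ring
  linarith

private lemma T_lt (t : ℕ) :
    (∑' m : ℕ, (1 / (2 * (m : ℝ) + 2) ^ (t + 4) - 1 / (2 * (m : ℝ) + 3) ^ (t + 4)))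
      < ∑' m : ℕ, (1 / (2 * (m : ℝ) + 2) ^ (t + 2) - 1 / (2 * (m : ℝ) + 3) ^ (t + 2)) := by
  have h2 : (2:ℕ) ≤ t + 2 := by omega
  have h4 : (2:ℕ) ≤ t + 4 := by omega
  refine Summable.tsum_lt_tsum (i := 0) (fun m => ?_) ?_
    ((sumO2 h4).sub (sumO3 h4)) ((sumO2 h2).sub (sumO3 h2))
  · exact pair_mono t (2 * (m : ℝ) + 2) (2 * (m : ℝ) + 3) (by have := Nat.cast_nonneg (α:=ℝ) m; linarith) (by ring)
  · simpa [one_div] using pair_strict t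

private lemma eta_lt (t : ℕ) :
    (∑' n : ℕ, 1 / (n : ℝ) ^ (t + 2)) * (1 - 2 / 2 ^ (t + 2))
      < (∑' n : ℕ, 1 / (n : ℝ) ^ (t + 4)) * (1 - 2 / 2 ^ (t + 4)) := by
  rw [eta_eq (by omega), eta_eq (by omega)]
  linarith [T_lt t]

private lemma lam_lt (t : ℕ) :
    (∑' m : ℕ, 1 / (2 * (m : ℝ) + 1) ^ (t + 4))
      < ∑' m : ℕ, 1 / (2 * (m : ℝ) + 1) ^ (t + 2) := by
  refine Summable.tsum_lt_tsum (i := 1) (fun m => ?_) ?_ (sumO1 (by omega)) (sumO1 (by omega))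
  · have h1 : (1:ℝ) ≤ 2 * (m : ℝ) + 1 := by have := Nat.cast_nonneg (α:=ℝ) m; linarith
    have h2 : (0:ℝ) < (2 * (m : ℝ) + 1) ^ (t + 2) := by positivity
    exact one_div_le_one_div_of_le h2 (pow_le_pow_right₀ h1 (by omega))
  · have h1 : (3:ℝ) ^ (t + 2) < 3 ^ (t + 4) := by
      exact pow_lt_pow_right₀ (by norm_num) (by omega)
    have h2 : (0:ℝ) < 3 ^ (t + 2) := by positivity
    have := one_div_lt_one_div_of_lt h2 h1
    norm_num at this ⊢
    convert this using 2 <;> norm_num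

private lemma Z_pos {s : ℕ} (hs : 2 ≤ s) : 0 < ∑' n : ℕ, 1 / (n : ℝ) ^ s := by
  refine Summable.tsum_pos (sumZ hs) (fun n => by positivity) 1 (by norm_num)

private lemma key_lower (t : ℕ) :
    (2 ^ (t + 3) - 4) * (∑' n : ℕ, 1 / (n : ℝ) ^ (t + 2))
      < (2 ^ (t + 3) - 1) * ∑' n : ℕ, 1 / (n : ℝ) ^ (t + 4) := by
  have h := eta_lt t
  have h2 : ((2:ℝ)) ^ (t + 2) ≠ 0 := by positivity
  have h4 : ((2:ℝ)) ^ (t + 4) ≠ 0 := by positivity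
  have e1 : (∑' n : ℕ, 1 / (n : ℝ) ^ (t + 2)) * (1 - 2 / 2 ^ (t + 2)) * 2 ^ (t + 3)
      = (2 ^ (t + 3) - 4) * ∑' n : ℕ, 1 / (n : ℝ) ^ (t + 2) := by
    field_simp
    ring
  have e2 : (∑' n : ℕ, 1 / (n : ℝ) ^ (t + 4)) * (1 - 2 / 2 ^ (t + 4)) * 2 ^ (t + 3)
      = (2 ^ (t + 3) - 1) * ∑' n : ℕ, 1 / (n : ℝ) ^ (t + 4) := by
    field_simp
    ring
  have := mul_lt_mul_of_pos_right h (show (0:ℝ) < 2 ^ (t + 3) by positivity)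
  rwa [e1, e2] at this

private lemma lam_Z {s : ℕ} (hs : 2 ≤ s) :
    (∑' m : ℕ, 1 / (2 * (m : ℝ) + 1) ^ s)
      = (∑' n : ℕ, 1 / (n : ℝ) ^ s) * (1 - 1 / 2 ^ s) := by
  have h1 := split hs
  have h2 := E_eq hs
  linear_combination -h1 - h2

private lemma key_upper (t : ℕ) :
    (2 ^ (t + 4) - 1) * (∑' n : ℕ, 1 / (n : ℝ) ^ (t + 4))
      < (2 ^ (t + 4) - 4) * ∑' n : ℕ, 1 / (n : ℝ) ^ (t + 2) := by
  have h := lam_lt t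
  rw [lam_Z (by omega), lam_Z (by omega)] at h
  have h2 : ((2:ℝ)) ^ (t + 2) ≠ 0 := by positivity
  have h4 : ((2:ℝ)) ^ (t + 4) ≠ 0 := by positivity
  have e1 : (∑' n : ℕ, 1 / (n : ℝ) ^ (t + 4)) * (1 - 1 / 2 ^ (t + 4)) * 2 ^ (t + 4)
      = (2 ^ (t + 4) - 1) * ∑' n : ℕ, 1 / (n : ℝ) ^ (t + 4) := by
    field_simp
  have e2 : (∑' n : ℕ, 1 / (n : ℝ) ^ (t + 2)) * (1 - 1 / 2 ^ (t + 2)) * 2 ^ (t + 4)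
      = (2 ^ (t + 4) - 4) * ∑' n : ℕ, 1 / (n : ℝ) ^ (t + 2) := by
    field_simp
    ring
  have := mul_lt_mul_of_pos_right h (show (0:ℝ) < 2 ^ (t + 4) by positivity)
  rwa [e1, e2] at this

private lemma abs_bernoulli_eq (j : ℕ) (hj : 1 ≤ j) :
    |(bernoulli (2 * j) : ℝ)|
      = (∑' n : ℕ, 1 / (n : ℝ) ^ (2 * j)) * (Nat.factorial (2 * j)) / (2 ^ (2 * j - 1) * π ^ (2 * j)) := by
  have hZ := (hasSum_zeta_nat (k := j) (by omega)).tsum_eq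
  have h := congrArg abs hZ
  rw [abs_of_pos (Z_pos (by omega))] at h
  rw [abs_div, abs_mul, abs_mul, abs_mul, abs_pow, abs_neg, abs_one, one_pow, one_mul,
      abs_of_pos (show (0:ℝ) < 2 ^ (2 * j - 1) by positivity),
      abs_of_pos (show (0:ℝ) < π ^ (2 * j) from pow_pos pi_pos _), Nat.abs_cast] at h
  rw [eq_div_iff (by positivity : ((2:ℝ) ^ (2 * j - 1) * π ^ (2 * j)) ≠ 0)]
  rw [h]
  have hf : ((Nat.factorial (2 * j)) : ℝ) ≠ 0 := by positivity
  field_simp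

theorem bernoulli_ratio_bounds (k : ℕ) (hk : 1 ≤ k) :
    (2 ^ (2 * k - 1) - 1) * (2 * k + 1) * (2 * k + 2) / ((2 ^ (2 * k + 1) - 1) * π ^ 2) <
      |(bernoulli (2 * k + 2) : ℝ)| / |(bernoulli (2 * k) : ℝ)| ∧
    |(bernoulli (2 * k + 2) : ℝ)| / |(bernoulli (2 * k) : ℝ)| <
      (2 ^ (2 * k) - 1) * (2 * k + 1) * (2 * k + 2) / ((2 ^ (2 * k + 2) - 1) * π ^ 2) := by
  obtain ⟨j, rfl⟩ : ∃ j, k = j + 1 := ⟨k - 1, by omega⟩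
  have hB1 := abs_bernoulli_eq (j + 1) (by omega)
  have hB2 := abs_bernoulli_eq (j + 2) (by omega)
  simp only [show 2 * (j + 1) = 2 * j + 2 from by ring,
    show 2 * (j + 1) - 1 = 2 * j + 1 from by omega,
    show 2 * j + 2 - 1 = 2 * j + 1 from by omega] at hB1
  simp only [show 2 * (j + 2) = 2 * j + 4 from by ring,
    show 2 * (j + 2) - 1 = 2 * j + 3 from by omega,
    show 2 * j + 4 - 1 = 2 * j + 3 from by omega] at hB2
  simp only [show 2 * (j + 1) + 2 = 2 * j + 4 from by ring,
    show 2 * (j + 1) - 1 = 2 * j + 1 from by omega,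
    show 2 * (j + 1) + 1 = 2 * j + 3 from by ring,
    show 2 * (j + 1) = 2 * j + 2 from by ring]
  have hApos : 0 < ∑' n : ℕ, 1 / (n : ℝ) ^ (2 * j + 2) := Z_pos (by omega)
  have hBpos : 0 < ∑' n : ℕ, 1 / (n : ℝ) ^ (2 * j + 4) := Z_pos (by omega)
  have hF : (Nat.factorial (2 * j + 4) : ℝ)
      = (2 * (j : ℝ) + 4) * (2 * (j : ℝ) + 3) * (Nat.factorial (2 * j + 2) : ℝ) := by
    rw [show 2 * j + 4 = (2 * j + 3) + 1 from by omega, Nat.factorial_succ,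
      show 2 * j + 3 = (2 * j + 2) + 1 from by omega, Nat.factorial_succ]
    push_cast
    ring
  have hRatio : |(bernoulli (2 * j + 4) : ℝ)| / |(bernoulli (2 * j + 2) : ℝ)|
      = (∑' n : ℕ, 1 / (n : ℝ) ^ (2 * j + 4)) * ((2 * (j : ℝ) + 3) * (2 * (j : ℝ) + 4))
        / (4 * π ^ 2 * ∑' n : ℕ, 1 / (n : ℝ) ^ (2 * j + 2)) := by
    rw [hB1, hB2, hF]
    have e24 : (2 : ℝ) ^ (2 * j + 3) = 4 * 2 ^ (2 * j + 1) := by ring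
    have e44 : π ^ (2 * j + 4) = π ^ (2 * j + 2) * π ^ 2 := by ring
    rw [e24, e44]
    have hf0 : (Nat.factorial (2 * j + 2) : ℝ) ≠ 0 := by positivity
    have hpi : π ≠ 0 := pi_ne_zero
    field_simp
  rw [hRatio]
  have key1 := key_lower (2 * j)
  have key2 := key_upper (2 * j)
  have hpp : (0:ℝ) < π ^ 2 * ((2 * (j : ℝ) + 3) * (2 * (j : ℝ) + 4)) := by positivity
  have hone1 : (1:ℝ) < 2 ^ (2 * j + 3) := one_lt_pow₀ (by norm_num) (by omega)
  have hone2 : (1:ℝ) < 2 ^ (2 * j + 4) := one_lt_pow₀ (by norm_num) (by omega)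
  have hd1 : (0:ℝ) < (2 ^ (2 * j + 3) - 1) * π ^ 2 :=
    mul_pos (by linarith) (by positivity)
  have hd2 : (0:ℝ) < (2 ^ (2 * j + 4) - 1) * π ^ 2 :=
    mul_pos (by linarith) (by positivity)
  constructor
  · rw [div_lt_div_iff₀ hd1 (by positivity)]
    rw [show (2:ℝ) ^ (2 * j + 3) = 4 * 2 ^ (2 * j + 1) from by ring] at key1 ⊢
    push_cast
    nlinarith [mul_lt_mul_of_pos_left key1 hpp]
  · rw [div_lt_div_iff₀ (by positivity) hd2]
    rw [show (2:ℝ) ^ (2 * j + 4) = 4 * 2 ^ (2 * j + 2) from by ring] at key2 ⊢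
    push_cast
    nlinarith [mul_lt_mul_of_pos_left key2 hpp]
end
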